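/- If T is a tree of order n, then the nullity of T satisfies null(T) ≤ 2a(T) - n, where a(T) is the annihilation number of T. -/

import Mathlib

open SimpleGraph Finset

def IsMatchingF {V : Type*} (G : SimpleGraph V) (M : Finset (Sym2 V)) : Prop :=
  (∀ e ∈ M, e ∈ G.edgeSet) ∧
  ∀ e ∈ M, ∀ f ∈ M, e ≠ f → ∀ v : V, ¬(v ∈ e ∧ v ∈ f)

noncomputable def matchNum {V : Type*} (G : SimpleGraph V) : ℕ :=
  sSup {k | ∃ M : Finset (Sym2 V), IsMatchingF G M ∧ M.card = k}

noncomputable def indepNum {V : Type*} [Fintype V] (G : SimpleGraph V) : ℕ :=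
  sSup {k | ∃ S : Finset V, (∀ v ∈ S, ∀ w ∈ S, ¬ G.Adj v w) ∧ S.card = k}

noncomputable def annNumG {V : Type*} [Fintype V] [DecidableEq V]
    (G : SimpleGraph V) [DecidableRel G.Adj] : ℕ :=
  sSup {a | ∃ A : Finset V, A.card = a ∧ (∑ v ∈ A, G.degree v) ≤ G.edgeFinset.card}


lemma exists_leaf {V : Type*} [Fintype V] (G : SimpleGraph V) (hG : G.IsAcyclic)
    {a b : V} (hab : G.Adj a b) :
    ∃ u w : V, G.Adj u w ∧ ∀ x, G.Adj u x → x = w := by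
  classical
  set S : Set ℕ := {n | ∃ (u v : V) (p : G.Walk u v), p.IsPath ∧ p.length = n} with hS
  have hbdd : BddAbove S := by
    refine ⟨Fintype.card V, ?_⟩
    rintro n ⟨u, v, p, hp, rfl⟩
    exact le_of_lt hp.length_lt
  have h1 : (1 : ℕ) ∈ S := ⟨a, b, Walk.cons hab Walk.nil, by simp [Walk.isPath_def, hab.ne], rfl⟩
  have hmem : sSup S ∈ S := Nat.sSup_mem ⟨1, h1⟩ hbdd
  have hge1 : 1 ≤ sSup S := le_csSup hbdd h1
  obtain ⟨u, v, p, hp, hlen⟩ := hmem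
  cases p with
  | nil => simp at hlen; omega
  | @cons _ w _ h q =>
    refine ⟨u, w, h, fun x hx => ?_⟩
    by_contra hxw
    have hxu : x ≠ u := fun he => G.irrefl (he ▸ hx)
    rw [Walk.cons_isPath_iff] at hp
    by_cases hxs : x ∈ q.support
    · -- two distinct paths from u to x
      have hq1 : (q.takeUntil x hxs).IsPath := hp.1.takeUntil hxs
      have hu1 : u ∉ (q.takeUntil x hxs).support :=
        fun hc => hp.2 (q.support_takeUntil_subset hxs hc)
      have hcpath : (Walk.cons h (q.takeUntil x hxs)).IsPath :=
        (Walk.cons_isPath_iff _ _).2 ⟨hq1, hu1⟩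
      have := hG.path_unique ⟨Walk.cons h (q.takeUntil x hxs), hcpath⟩
        (Path.singleton hx)
      have hl : (Walk.cons h (q.takeUntil x hxs)).length = 1 := by
        rw [show (Walk.cons h (q.takeUntil x hxs)) = (Path.singleton hx).1 from
          congrArg Subtype.val this]
        simp [Path.singleton]
      have hl0 : (q.takeUntil x hxs).length = 0 := by
        simp only [Walk.length_cons] at hl; omega
      exact hxw (Walk.eq_of_length_eq_zero hl0).symm
    · have hext : (Walk.cons hx.symm (Walk.cons h q)).IsPath := by
        rw [Walk.cons_isPath_iff]
        refine ⟨(Walk.cons_isPath_iff _ _).2 hp, ?_⟩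
        simp [hxu, hxs]
      have : (Walk.cons hx.symm (Walk.cons h q)).length ∈ S :=
        ⟨x, v, _, hext, rfl⟩
      have hle := le_csSup hbdd this
      simp only [Walk.length_cons] at hle hlen
      omega


lemma isAcyclic_mono {V : Type*} {G H : SimpleGraph V} (hle : H ≤ G) (hG : G.IsAcyclic) :
    H.IsAcyclic := fun _ c hc => hG (c.mapLe hle) (hc.mapLe hle)

lemma isAcyclic_induce {V : Type*} {G : SimpleGraph V} (hG : G.IsAcyclic) (s : Set V) :
    (G.induce s).IsAcyclic := fun _ c hc =>
  hG (c.map (Embedding.induce s).toHom) (hc.map Subtype.val_injective)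

lemma konig_forest_aux : ∀ (k : ℕ) {V : Type*} [Fintype V] [DecidableEq V]
    (G : SimpleGraph V), G.IsAcyclic → G.edgeSet.ncard ≤ k →
    ∃ (M : Finset (V × V)) (C : Finset V),
      (∀ p ∈ M, G.Adj p.1 p.2) ∧
      (∀ p ∈ M, ∀ q ∈ M, (p.1 = q.1 ∨ p.1 = q.2 ∨ p.2 = q.1 ∨ p.2 = q.2) → p = q) ∧
      (∀ v w : V, G.Adj v w → v ∈ C ∨ w ∈ C) ∧
      (∀ c ∈ C, ∃ w, G.Adj c w) ∧
      C.card = M.card := by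
  intro k
  induction k with
  | zero =>
    intro V _ _ G hG hcard
    have he : G.edgeSet = ∅ := Set.ncard_eq_zero (Set.toFinite _) |>.mp (Nat.le_zero.mp hcard)
    refine ⟨∅, ∅, by simp, by simp, fun v w hvw => ?_, by simp, by simp⟩
    have : s(v,w) ∈ (∅ : Set (Sym2 V)) := he ▸ (hvw : s(v,w) ∈ G.edgeSet)
    exact this.elim
  | succ k ih =>
    intro V _ _ G hG hcard
    by_cases hE : ∀ v w : V, ¬ G.Adj v w
    · exact ⟨∅, ∅, by simp, by simp, fun v w hvw => absurd hvw (hE v w), by simp, by simp⟩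
    push_neg at hE
    obtain ⟨a, b, hab⟩ := hE
    obtain ⟨u, w, huw, hleaf⟩ := exists_leaf G hG hab
    set G' : SimpleGraph V := G.deleteEdges (G.incidenceSet w) with hG'
    have hG'le : G' ≤ G := G.deleteEdges_le _
    have hG'adj : ∀ x y : V, G'.Adj x y ↔ G.Adj x y ∧ w ≠ x ∧ w ≠ y := by
      intro x y
      simp only [hG', deleteEdges_adj, mk'_mem_incidenceSet_iff]
      constructor
      · rintro ⟨h1, h2⟩; exact ⟨h1, fun h => h2 ⟨h1, Or.inl h⟩, fun h => h2 ⟨h1, Or.inr h⟩⟩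
      · rintro ⟨h1, h2, h3⟩; exact ⟨h1, fun hh => by tauto⟩
    have hsub : G'.edgeSet ⊂ G.edgeSet := by
      constructor
      · exact edgeSet_mono hG'le
      · intro hsup
        have : s(u,w) ∈ G'.edgeSet := hsup huw
        rw [mem_edgeSet, hG'adj] at this
        exact this.2.2 rfl
    have hlt : G'.edgeSet.ncard ≤ k := by
      have := Set.ncard_lt_ncard hsub (Set.toFinite _)
      omega
    obtain ⟨M', C', hadj', hdis', hcov', hiso', hcard'⟩ := ih G' (isAcyclic_mono hG'le hG) hlt
    have hwM' : ∀ p ∈ M', p.1 ≠ w ∧ p.2 ≠ w ∧ p.1 ≠ u ∧ p.2 ≠ u := by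
      intro p hp
      have h1 := (hG'adj p.1 p.2).mp (hadj' p hp)
      refine ⟨fun h => h1.2.1 h.symm, fun h => h1.2.2 h.symm, ?_, ?_⟩
      · intro h; exact h1.2.2 (hleaf p.2 (h ▸ h1.1)).symm
      · intro h; exact h1.2.1 (hleaf p.1 (h ▸ h1.1.symm)).symm
    have hwC' : w ∉ C' := by
      intro hw
      obtain ⟨x, hx⟩ := hiso' w hw
      exact ((hG'adj w x).mp hx).2.1 rfl
    refine ⟨insert (u, w) M', insert w C', ?_, ?_, ?_, ?_, ?_⟩
    · intro p hp
      rcases Finset.mem_insert.mp hp with h | h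
      · subst h; exact huw
      · exact hG'le (hadj' p h)
    · intro p hp q hq hshare
      rcases Finset.mem_insert.mp hp with h1 | h1 <;>
        rcases Finset.mem_insert.mp hq with h2 | h2
      · rw [h1, h2]
      · exfalso
        subst h1
        obtain ⟨hq1, hq2, hq3, hq4⟩ := hwM' q h2
        simp only at hshare
        rcases hshare with h | h | h | h
        exacts [hq3 h.symm, hq4 h.symm, hq1 h.symm, hq2 h.symm]
      · exfalso
        subst h2
        obtain ⟨hq1, hq2, hq3, hq4⟩ := hwM' p h1
        simp only at hshare
        rcases hshare with h | h | h | h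
        exacts [hq3 h, hq1 h, hq4 h, hq2 h]
      · exact hdis' p h1 q h2 hshare
    · intro v v' hvv'
      by_cases hv : w = v
      · exact Or.inl (Finset.mem_insert.mpr (Or.inl hv.symm))
      by_cases hv' : w = v'
      · exact Or.inr (Finset.mem_insert.mpr (Or.inl hv'.symm))
      have : G'.Adj v v' := (hG'adj v v').mpr ⟨hvv', hv, hv'⟩
      rcases hcov' v v' this with h | h
      · exact Or.inl (Finset.mem_insert.mpr (Or.inr h))
      · exact Or.inr (Finset.mem_insert.mpr (Or.inr h))
    · intro c hc
      rcases Finset.mem_insert.mp hc with h | h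
      · exact ⟨u, h ▸ huw.symm⟩
      · obtain ⟨x, hx⟩ := hiso' c h
        exact ⟨x, hG'le hx⟩
    · have hnm : (u, w) ∉ M' := fun h => (hwM' _ h).2.2.1 rfl
      rw [Finset.card_insert_of_notMem hwC', Finset.card_insert_of_notMem hnm, hcard']

lemma perm_unique : ∀ (k : ℕ) {W : Type u} [Fintype W] [DecidableEq W]
    (H : SimpleGraph W), Fintype.card W ≤ k → H.IsAcyclic →
    ∀ σ τ : Equiv.Perm W, (∀ i, H.Adj i (σ i)) → (∀ i, H.Adj i (τ i)) → σ = τ := by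
  intro k
  induction k with
  | zero =>
    intro W _ _ H hcard _ σ τ _ _
    have : IsEmpty W := Fintype.card_eq_zero_iff.mp (Nat.le_zero.mp hcard)
    exact Equiv.ext fun i => isEmptyElim i
  | succ k ih =>
    intro W _ _ H hcard hH σ τ hσ hτ
    by_cases hW : IsEmpty W
    · exact Equiv.ext fun i => isEmptyElim i
    rw [not_isEmpty_iff] at hW
    obtain ⟨i₀⟩ := hW
    obtain ⟨u, x, hux, hleaf⟩ := exists_leaf H hH (hσ i₀)
    have hne : u ≠ x := hux.ne
    -- σ and τ both swap u and x
    have hσu : σ u = x := hleaf _ (hσ u)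
    have hτu : τ u = x := hleaf _ (hτ u)
    have hσx : σ x = u := by
      have h1 : σ⁻¹ u = x := hleaf _ (by
        have := hσ (σ⁻¹ u)
        simpa using this.symm)
      rw [← h1]; simp
    have hτx : τ x = u := by
      have h1 : τ⁻¹ u = x := hleaf _ (by
        have := hτ (τ⁻¹ u)
        simpa using this.symm)
      rw [← h1]; simp
    -- restrict to the complement of {u, x}
    set s : Set W := {y | y ≠ u ∧ y ≠ x} with hs
    have hmaps : ∀ (ρ : Equiv.Perm W), ρ u = x → ρ x = u →
        ∀ y, y ∈ s ↔ ρ y ∈ s := by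
      intro ρ hρu hρx y
      constructor
      · rintro ⟨h1, h2⟩
        constructor
        · intro h; exact h2 (ρ.injective (h.trans hρx.symm))
        · intro h; exact h1 (ρ.injective (h.trans hρu.symm))
      · rintro ⟨h1, h2⟩
        constructor
        · intro h; exact h2 (by rw [h, hρu])
        · intro h; exact h1 (by rw [h, hρx])
    have hσs := hmaps σ hσu hσx
    have hτs := hmaps τ hτu hτx
    set σ' : Equiv.Perm s := σ.subtypePerm (fun y => (hσs y).symm) with hσ'
    set τ' : Equiv.Perm s := τ.subtypePerm (fun y => (hτs y).symm) with hτ'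
    have hcards : Fintype.card s ≤ k := by
      classical
      have hscard : Fintype.card s = Fintype.card W - 2 := by
        rw [← Set.toFinset_card]
        have hteq : s.toFinset = ({u, x} : Finset W)ᶜ := by
          ext y
          simp only [Set.mem_toFinset, hs, Set.mem_setOf_eq, Finset.mem_compl,
            Finset.mem_insert, Finset.mem_singleton, not_or]
        rw [hteq, Finset.card_compl]
        congr 1
        rw [Finset.card_insert_of_notMem (by simp [hne]), Finset.card_singleton]
      omega
    have := ih (H.induce s) hcards (isAcyclic_induce hH s) σ' τ'
      (fun i => by exact hσ i) (fun i => by exact hτ i)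
    ext y
    by_cases hy1 : y = u
    · rw [hy1, hσu, hτu]
    by_cases hy2 : y = x
    · rw [hy2, hσx, hτx]
    have : σ' ⟨y, hy1, hy2⟩ = τ' ⟨y, hy1, hy2⟩ := by rw [this]
    exact congrArg Subtype.val this

lemma det_adjMatrix_ne_zero {W : Type u} [Fintype W] [DecidableEq W]
    (H : SimpleGraph W) [DecidableRel H.Adj] (hH : H.IsAcyclic)
    (σ₀ : Equiv.Perm W) (hσ₀ : ∀ i, H.Adj i (σ₀ i)) :
    (H.adjMatrix ℚ).det ≠ 0 := by
  rw [Matrix.det_apply]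
  rw [Finset.sum_eq_single σ₀]
  · have : ∀ i, (H.adjMatrix ℚ) (σ₀ i) i = 1 := fun i => by
      simp [SimpleGraph.adjMatrix_apply, (hσ₀ i).symm]
    rw [Finset.prod_congr rfl (fun i _ => this i), Finset.prod_const_one]
    rcases Int.units_eq_one_or (Equiv.Perm.sign σ₀) with h | h <;> simp [h]
  · intro σ _ hσne
    by_cases hσ : ∀ i, H.Adj i (σ i)
    · exact absurd (perm_unique (Fintype.card W) H le_rfl hH σ σ₀ hσ hσ₀) hσne
    · push_neg at hσ
      obtain ⟨i, hi⟩ := hσ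
      have h0 : (H.adjMatrix ℚ) (σ i) i = 0 := by
        simp only [SimpleGraph.adjMatrix_apply]
        rw [if_neg (fun h => hi h.symm)]
      have hz : ∏ j, (H.adjMatrix ℚ) (σ j) j = 0 := Finset.prod_eq_zero (Finset.mem_univ i) h0
      rw [hz, smul_zero]
  · intro h; exact absurd (Finset.mem_univ σ₀) h

theorem tree_nullity_le {V : Type*} [Fintype V] [DecidableEq V]
    (G : SimpleGraph V) [DecidableRel G.Adj] (hT : G.IsTree) :
    ((Fintype.card V - (G.adjMatrix ℚ).rank : ℕ) : ℤ) ≤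
      2 * (annNumG G : ℤ) - Fintype.card V := by
  classical
  obtain ⟨M, C, hadj, hdis, hcov, hiso, hcardC⟩ :=
    konig_forest_aux (G.edgeSet.ncard) G hT.IsAcyclic le_rfl
  set S : Finset V := M.biUnion (fun p => {p.1, p.2}) with hSdef
  have hmemS : ∀ v, v ∈ S ↔ ∃ p ∈ M, v = p.1 ∨ v = p.2 := by
    intro v
    simp only [hSdef, Finset.mem_biUnion, Finset.mem_insert, Finset.mem_singleton]
  -- card S = 2 * M.card
  have hcardS : S.card = 2 * M.card := by
    rw [hSdef, Finset.card_biUnion]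
    · rw [Finset.sum_congr rfl (fun p hp => ?_), Finset.sum_const, smul_eq_mul, mul_comm]
      rw [Finset.card_insert_of_notMem (by simp [(hadj p hp).ne]), Finset.card_singleton]
    · intro p hp q hq hpq
      simp only [Finset.disjoint_left, Finset.mem_insert, Finset.mem_singleton]
      rintro v (rfl | rfl) (h | h) <;> exact hpq (hdis p hp q hq (by tauto))
  -- unique pair containing each support vertex
  have huniq : ∀ v ∈ S, ∃! p, p ∈ M ∧ (v = p.1 ∨ v = p.2) := by
    intro v hv
    obtain ⟨p, hp, hvp⟩ := (hmemS v).mp hv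
    refine ⟨p, ⟨hp, hvp⟩, ?_⟩
    rintro q ⟨hq, hvq⟩
    exact hdis q hq p hp (by rcases hvp with h | h <;> rcases hvq with h' | h' <;>
      simp [← h, ← h'] <;> tauto)
  set pf : V → V × V := fun v =>
    if hv : v ∈ S then M.choose _ (huniq v hv) else (v, v) with hpf
  have hpfM : ∀ v ∈ S, pf v ∈ M ∧ (v = (pf v).1 ∨ v = (pf v).2) := by
    intro v hv
    rw [hpf]; simp only [dif_pos hv]
    exact ⟨M.choose_mem _ (huniq v hv), M.choose_property _ (huniq v hv)⟩
  set f : V → V := fun v => if v = (pf v).1 then (pf v).2 else (pf v).1 with hf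
  have hkey : ∀ v ∈ S, f v ∈ S ∧ G.Adj v (f v) ∧ f v ≠ v ∧ pf (f v) = pf v := by
    intro v hv
    obtain ⟨hpM, hvp⟩ := hpfM v hv
    have hne : (pf v).1 ≠ (pf v).2 := (hadj _ hpM).ne
    have hfv : (v = (pf v).1 ∧ f v = (pf v).2) ∨ (v = (pf v).2 ∧ f v = (pf v).1) := by
      rcases hvp with h | h
      · exact Or.inl ⟨h, by rw [hf]; simp only [if_pos h]⟩
      · have : v ≠ (pf v).1 := fun hc => hne (hc ▸ h ▸ rfl)
        exact Or.inr ⟨h, by rw [hf]; simp only [if_neg this]⟩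
    have hfS : f v ∈ S := by
      rw [hmemS]
      rcases hfv with ⟨_, h⟩ | ⟨_, h⟩
      exacts [⟨pf v, hpM, Or.inr h⟩, ⟨pf v, hpM, Or.inl h⟩]
    have hfadj : G.Adj v (f v) := by
      rcases hfv with ⟨h1, h2⟩ | ⟨h1, h2⟩
      · have h3 := hadj _ hpM
        rw [← h1, ← h2] at h3
        exact h3
      · have h3 := (hadj _ hpM).symm
        rw [← h1, ← h2] at h3
        exact h3
    refine ⟨hfS, hfadj, hfadj.ne', ?_⟩
    have hfvS := hfS
    obtain ⟨hpM', hvp'⟩ := hpfM (f v) hfvS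
    exact (huniq (f v) hfvS).unique ⟨hpM', hvp'⟩
      ⟨hpM, by rcases hfv with ⟨_, h⟩ | ⟨_, h⟩ <;> [exact Or.inr h; exact Or.inl h]⟩
  have hfeval : ∀ w, f w = if w = (pf w).1 then (pf w).2 else (pf w).1 := fun w => rfl
  have hff : ∀ v ∈ S, f (f v) = v := by
    intro v hv
    obtain ⟨hfS, hfadj, hfne, hpfeq⟩ := hkey v hv
    obtain ⟨hpM, hvp⟩ := hpfM v hv
    have hne : (pf v).1 ≠ (pf v).2 := (hadj _ hpM).ne
    rcases hvp with h | h
    · have hfv : f v = (pf v).2 := by rw [hfeval v]; exact if_pos h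
      rw [hfeval (f v), hpfeq, hfv, if_neg (hne.symm : (pf v).2 ≠ (pf v).1)]
      exact h.symm
    · have hv1 : v ≠ (pf v).1 := fun hc => hne (hc ▸ h ▸ rfl)
      have hfv : f v = (pf v).1 := by rw [hfeval v]; exact if_neg hv1
      rw [hfeval (f v), hpfeq, hfv, if_pos rfl]
      exact h.symm
  -- the induced graph on the support, with its perfect-matching involution
  set s : Set V := ↑S with hsdef
  set H : SimpleGraph s := G.induce s with hH
  have hg : Function.Involutive (fun v : s => (⟨f v.1, (hkey v.1 v.2).1⟩ : s)) := by
    intro v; exact Subtype.ext (hff v.1 v.2)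
  set σ₀ : Equiv.Perm s := hg.toPerm _ with hσ₀def
  have hσ₀adj : ∀ i : s, H.Adj i (σ₀ i) := by
    intro i
    exact (hkey i.1 i.2).2.1
  have hdet : (H.adjMatrix ℚ).det ≠ 0 :=
    det_adjMatrix_ne_zero H (isAcyclic_induce hT.IsAcyclic s) σ₀ hσ₀adj
  -- rank bound
  have hrankH : (H.adjMatrix ℚ).rank = S.card := by
    rw [Matrix.rank_of_isUnit _ ((Matrix.isUnit_iff_isUnit_det _).mpr
      (isUnit_iff_ne_zero.mpr hdet))]
    exact Fintype.card_coe S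
  have hsub : H.adjMatrix ℚ =
      ((1 : Matrix V V ℚ).submatrix (Subtype.val : s → V) id) * (G.adjMatrix ℚ) *
      ((1 : Matrix V V ℚ).submatrix id (Subtype.val : s → V)) := by
    ext i j
    simp only [Matrix.mul_apply, Matrix.one_apply, Matrix.submatrix_apply, id,
      ite_mul, mul_ite, one_mul, zero_mul, mul_one, mul_zero,
      Finset.sum_ite_eq, Finset.sum_ite_eq', Finset.mem_univ, if_true]
    have hswap : ∀ x : V, (if G.Adj x (↑j : V) then (if (↑i : V) = x then (1:ℚ) else 0) else 0)
        = if (↑i : V) = x then (if G.Adj (↑i : V) (↑j : V) then (1:ℚ) else 0) else 0 := by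
      intro x
      by_cases h : (↑i : V) = x
      · subst h; simp
      · simp [h]
    rw [show (adjMatrix ℚ G) (↑i) (↑j) = if G.Adj (↑i : V) (↑j : V) then (1:ℚ) else 0 from rfl]
    have hHG : H.Adj i j ↔ G.Adj (↑i : V) (↑j : V) := Iff.rfl
    by_cases h : G.Adj (↑i : V) (↑j : V) <;>
      simp [SimpleGraph.adjMatrix_apply, hHG, h]
  have hrank : 2 * M.card ≤ (G.adjMatrix ℚ).rank := by
    calc 2 * M.card = (H.adjMatrix ℚ).rank := by rw [hrankH, hcardS]
    _ ≤ (G.adjMatrix ℚ).rank := by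
        rw [hsub]
        exact le_trans (Matrix.rank_mul_le_left _ _)
          (Matrix.rank_mul_le_right _ _)
  -- annihilation bound
  have hsum : (∑ v ∈ Cᶜ, G.degree v) ≤ G.edgeFinset.card := by
    have hdeg : ∀ v, G.degree v = ∑ e ∈ G.edgeFinset, (if v ∈ e then 1 else 0) := by
      intro v
      rw [← card_incidenceFinset_eq_degree, incidenceFinset_eq_filter, Finset.card_filter]
    calc (∑ v ∈ Cᶜ, G.degree v)
        = ∑ v ∈ Cᶜ, ∑ e ∈ G.edgeFinset, (if v ∈ e then 1 else 0) :=
          Finset.sum_congr rfl (fun v _ => hdeg v)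
      _ = ∑ e ∈ G.edgeFinset, ∑ v ∈ Cᶜ, (if v ∈ e then 1 else 0) := Finset.sum_comm
      _ ≤ ∑ _e ∈ G.edgeFinset, 1 := by
          refine Finset.sum_le_sum (fun e he => ?_)
          rw [← Finset.card_filter]
          rw [SimpleGraph.mem_edgeFinset] at he
          induction e with
          | _ x y =>
            have hxy : G.Adj x y := he
            rw [Finset.card_le_one]
            intro a ha b hb
            simp only [Finset.mem_filter, Finset.mem_compl, Sym2.mem_iff] at ha hb
            rcases hcov x y hxy with hc | hc
            · rcases ha.2 with rfl | rfl
              · exact absurd hc ha.1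
              · rcases hb.2 with rfl | rfl
                · exact absurd hc hb.1
                · rfl
            · rcases ha.2 with rfl | rfl
              · rcases hb.2 with rfl | rfl
                · rfl
                · exact absurd hc hb.1
              · exact absurd hc ha.1
      _ = G.edgeFinset.card := by simp
  have hann : Cᶜ.card ≤ annNumG G := by
    apply le_csSup
    · refine ⟨Fintype.card V, ?_⟩
      rintro a ⟨A, hA, _⟩
      exact hA ▸ Finset.card_le_univ A
    · exact ⟨Cᶜ, rfl, hsum⟩
  -- final arithmetic
  have h2m : 2 * M.card ≤ Fintype.card V := hcardS ▸ Finset.card_le_univ S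
  have hcompl : Cᶜ.card + C.card = Fintype.card V := by
    rw [add_comm]; exact Finset.card_add_card_compl C
  omega
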